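/- Let X₀, Π, V be nonnegative random variables on a probability space (Ω, 𝓕, P) such that Π is independent of X₀ and V is independent of X₀. Let ξ > 0, u > 0, and set X_j := Π · X₀ + V. Then E[X_j^ξ · 1{X₀ > u, X_j > u}] ≤ 2^ξ · ( E[Π^ξ] · E[X₀^ξ · 1{X₀ > u}] + P(X₀ > u) · E[V^ξ · 1{V > u/2}] + (u/2)^ξ · P(X₀ > u, Π · X₀ > u/2) ). -/

import Mathlib

open MeasureTheory ProbabilityTheory
open scoped ENNReal

/-- Elementary inequality: for nonnegative reals, `(a+b)^ξ ≤ 2^ξ (a^ξ + b^ξ)`. -/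
lemma aux_add_rpow_le {a b ξ : ℝ} (ha : 0 ≤ a) (hb : 0 ≤ b) (hξ : 0 ≤ ξ) :
    (a + b) ^ ξ ≤ 2 ^ ξ * (a ^ ξ + b ^ ξ) := by
  have hmax : a + b ≤ 2 * max a b := by
    rcases max_cases a b with ⟨h, h'⟩ | ⟨h, h'⟩ <;> nlinarith
  have h1 : (a + b) ^ ξ ≤ (2 * max a b) ^ ξ :=
    Real.rpow_le_rpow (by positivity) hmax hξ
  have h2 : (2 * max a b : ℝ) ^ ξ = 2 ^ ξ * (max a b) ^ ξ :=
    Real.mul_rpow (by norm_num) (le_max_of_le_left ha)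
  have h3 : (max a b : ℝ) ^ ξ ≤ a ^ ξ + b ^ ξ := by
    rcases max_cases a b with ⟨h, _⟩ | ⟨h, _⟩ <;> rw [h]
    · nlinarith [Real.rpow_nonneg hb ξ]
    · nlinarith [Real.rpow_nonneg ha ξ]
  calc (a + b) ^ ξ ≤ 2 ^ ξ * (max a b) ^ ξ := h2 ▸ h1
    _ ≤ 2 ^ ξ * (a ^ ξ + b ^ ξ) := by
        have : (0:ℝ) ≤ 2 ^ ξ := by positivity
        nlinarith

/-- The intermediate cross-moment bound from Appendix B of the paper: if `Π` and `V` are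
each independent of `X₀` and `X_j = Π X₀ + V`, then
`E[X_j^ξ 1{X₀>u, X_j>u}] ≤ 2^ξ ( E[Π^ξ] E[X₀^ξ 1{X₀>u}] + P(X₀>u) E[V^ξ 1{V>u/2}]
  + (u/2)^ξ P(X₀>u, Π X₀ > u/2) )`. -/
theorem stmt4 {Ω : Type*} [MeasurableSpace Ω] (P : Measure Ω) [IsProbabilityMeasure P]
    (X₀ Pi V : Ω → ℝ)
    (hX₀nn : ∀ ω, 0 ≤ X₀ ω) (hPinn : ∀ ω, 0 ≤ Pi ω) (hVnn : ∀ ω, 0 ≤ V ω)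
    (hX₀m : Measurable X₀) (hPim : Measurable Pi) (hVm : Measurable V)
    (hindep₁ : IndepFun Pi X₀ P) (hindep₂ : IndepFun V X₀ P)
    (ξ : ℝ) (hξ : 0 < ξ) (u : ℝ) (hu : 0 < u)
    (Xj : Ω → ℝ) (hXj : Xj = fun ω => Pi ω * X₀ ω + V ω) :
    ∫⁻ ω, (if X₀ ω > u ∧ Xj ω > u then ENNReal.ofReal (Xj ω ^ ξ) else 0) ∂P
      ≤ ENNReal.ofReal ((2 : ℝ) ^ ξ) *
        ( (∫⁻ ω, ENNReal.ofReal (Pi ω ^ ξ) ∂P)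
            * (∫⁻ ω, (if X₀ ω > u then ENNReal.ofReal (X₀ ω ^ ξ) else 0) ∂P)
          + P {ω | X₀ ω > u}
            * (∫⁻ ω, (if V ω > u / 2 then ENNReal.ofReal (V ω ^ ξ) else 0) ∂P)
          + ENNReal.ofReal ((u / 2) ^ ξ)
            * P {ω | X₀ ω > u ∧ Pi ω * X₀ ω > u / 2} ) := by
  subst hXj
  have hξ' := hξ.le
  -- the three bounding functions
  set f1 : Ω → ℝ≥0∞ := fun ω =>
    ENNReal.ofReal (Pi ω ^ ξ) * (if X₀ ω > u then ENNReal.ofReal (X₀ ω ^ ξ) else 0) with hf1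
  set f2 : Ω → ℝ≥0∞ := fun ω =>
    (if X₀ ω > u then (1:ℝ≥0∞) else 0) * (if V ω > u / 2 then ENNReal.ofReal (V ω ^ ξ) else 0)
    with hf2
  set f3 : Ω → ℝ≥0∞ := fun ω =>
    ENNReal.ofReal ((u / 2) ^ ξ) * (if X₀ ω > u ∧ Pi ω * X₀ ω > u / 2 then (1:ℝ≥0∞) else 0)
    with hf3
  have hsu : MeasurableSet {x : ℝ | x > u} := measurableSet_Ioi
  have hsu2 : MeasurableSet {x : ℝ | x > u / 2} := measurableSet_Ioi
  have hm1 : Measurable f1 := by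
    apply Measurable.mul
    · fun_prop
    · exact Measurable.ite (hsu.preimage hX₀m) (by fun_prop) measurable_const
  have hm2 : Measurable f2 := by
    apply Measurable.mul
    · exact Measurable.ite (hsu.preimage hX₀m) measurable_const measurable_const
    · exact Measurable.ite (hsu2.preimage hVm) (by fun_prop) measurable_const
  have hm3 : Measurable f3 := by
    apply Measurable.mul measurable_const
    have : MeasurableSet {ω | X₀ ω > u ∧ Pi ω * X₀ ω > u / 2} :=
      (hsu.preimage hX₀m).inter (hsu2.preimage (hPim.mul hX₀m))
    exact Measurable.ite this measurable_const measurable_const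
  -- pointwise bound
  have hpt : ∀ ω, (if X₀ ω > u ∧ Pi ω * X₀ ω + V ω > u then
        ENNReal.ofReal ((Pi ω * X₀ ω + V ω) ^ ξ) else 0)
      ≤ ENNReal.ofReal ((2:ℝ) ^ ξ) * (f1 ω + f2 ω + f3 ω) := by
    intro ω
    by_cases hc : X₀ ω > u ∧ Pi ω * X₀ ω + V ω > u
    swap
    · simp [hc]
    obtain ⟨hx, hj⟩ := hc
    rw [if_pos ⟨hx, hj⟩]
    set a := Pi ω * X₀ ω with ha
    set b := V ω with hb
    have hann : 0 ≤ a := mul_nonneg (hPinn ω) (hX₀nn ω)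
    have hbnn : 0 ≤ b := hVnn ω
    have haξ : ENNReal.ofReal (a ^ ξ) =
        ENNReal.ofReal (Pi ω ^ ξ) * ENNReal.ofReal (X₀ ω ^ ξ) := by
      rw [ha, Real.mul_rpow (hPinn ω) (hX₀nn ω),
        ENNReal.ofReal_mul (Real.rpow_nonneg (hPinn ω) ξ)]
    have hf1ω : f1 ω = ENNReal.ofReal (a ^ ξ) := by
      rw [hf1]; simp only [if_pos hx]; rw [haξ]
    by_cases hv : b > u / 2
    · -- use the f2 term
      have key : (a + b) ^ ξ ≤ 2 ^ ξ * (a ^ ξ + b ^ ξ) := aux_add_rpow_le hann hbnn hξ'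
      calc ENNReal.ofReal ((a + b) ^ ξ)
          ≤ ENNReal.ofReal (2 ^ ξ * (a ^ ξ + b ^ ξ)) := ENNReal.ofReal_le_ofReal key
        _ = ENNReal.ofReal ((2:ℝ) ^ ξ) *
              (ENNReal.ofReal (a ^ ξ) + ENNReal.ofReal (b ^ ξ)) := by
            rw [ENNReal.ofReal_mul (by positivity),
              ENNReal.ofReal_add (Real.rpow_nonneg hann ξ) (Real.rpow_nonneg hbnn ξ)]
        _ ≤ ENNReal.ofReal ((2:ℝ) ^ ξ) * (f1 ω + f2 ω + f3 ω) := by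
            apply mul_le_mul_right
            have h2 : ENNReal.ofReal (b ^ ξ) ≤ f2 ω := by
              rw [hf2]; simp [hx, show u / 2 < V ω from hv]; exact le_rfl
            calc ENNReal.ofReal (a ^ ξ) + ENNReal.ofReal (b ^ ξ)
                ≤ f1 ω + f2 ω := by rw [hf1ω]; exact add_le_add le_rfl h2
              _ ≤ f1 ω + f2 ω + f3 ω := le_self_add
    · -- b ≤ u/2, hence a > u/2 ; use the f3 term
      push_neg at hv
      have hagt : a > u / 2 := by linarith
      have hbb : b ^ ξ ≤ (u / 2) ^ ξ := Real.rpow_le_rpow hbnn hv hξ'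
      have key : (a + b) ^ ξ ≤ 2 ^ ξ * (a ^ ξ + (u / 2) ^ ξ) := by
        calc (a + b) ^ ξ ≤ 2 ^ ξ * (a ^ ξ + b ^ ξ) := aux_add_rpow_le hann hbnn hξ'
          _ ≤ 2 ^ ξ * (a ^ ξ + (u / 2) ^ ξ) := by
              have : (0:ℝ) ≤ 2 ^ ξ := by positivity
              nlinarith
      calc ENNReal.ofReal ((a + b) ^ ξ)
          ≤ ENNReal.ofReal (2 ^ ξ * (a ^ ξ + (u / 2) ^ ξ)) := ENNReal.ofReal_le_ofReal key
        _ = ENNReal.ofReal ((2:ℝ) ^ ξ) *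
              (ENNReal.ofReal (a ^ ξ) + ENNReal.ofReal ((u / 2) ^ ξ)) := by
            rw [ENNReal.ofReal_mul (by positivity),
              ENNReal.ofReal_add (Real.rpow_nonneg hann ξ) (by positivity)]
        _ ≤ ENNReal.ofReal ((2:ℝ) ^ ξ) * (f1 ω + f2 ω + f3 ω) := by
            apply mul_le_mul_right
            have h3 : ENNReal.ofReal ((u / 2) ^ ξ) ≤ f3 ω := by
              rw [hf3]; simp [hx, show u / 2 < Pi ω * X₀ ω from hagt]
            calc ENNReal.ofReal (a ^ ξ) + ENNReal.ofReal ((u / 2) ^ ξ)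
                ≤ f1 ω + f3 ω := by rw [hf1ω]; exact add_le_add le_rfl h3
              _ ≤ f1 ω + f2 ω + f3 ω := by
                  rw [add_right_comm]; exact le_self_add
  -- integrate the pointwise bound
  have hstep : ∫⁻ ω, (if X₀ ω > u ∧ Pi ω * X₀ ω + V ω > u then
        ENNReal.ofReal ((Pi ω * X₀ ω + V ω) ^ ξ) else 0) ∂P
      ≤ ENNReal.ofReal ((2:ℝ) ^ ξ) * ((∫⁻ ω, f1 ω ∂P) + (∫⁻ ω, f2 ω ∂P) + (∫⁻ ω, f3 ω ∂P)) := by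
    calc _ ≤ ∫⁻ ω, ENNReal.ofReal ((2:ℝ) ^ ξ) * (f1 ω + f2 ω + f3 ω) ∂P := lintegral_mono hpt
      _ = ENNReal.ofReal ((2:ℝ) ^ ξ) * ∫⁻ ω, (f1 ω + f2 ω + f3 ω) ∂P :=
          lintegral_const_mul _ (by exact (hm1.add hm2).add hm3)
      _ = _ := by rw [lintegral_add_right _ hm3, lintegral_add_right _ hm2]
  refine hstep.trans (le_of_eq ?_)
  congr 1
  -- evaluate the three integrals
  have e1 : ∫⁻ ω, f1 ω ∂P = (∫⁻ ω, ENNReal.ofReal (Pi ω ^ ξ) ∂P)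
      * (∫⁻ ω, (if X₀ ω > u then ENNReal.ofReal (X₀ ω ^ ξ) else 0) ∂P) := by
    have hφ : Measurable fun x : ℝ => ENNReal.ofReal (x ^ ξ) := by fun_prop
    have hψ : Measurable fun x : ℝ => if x > u then ENNReal.ofReal (x ^ ξ) else 0 :=
      Measurable.ite hsu (by fun_prop) measurable_const
    exact lintegral_mul_eq_lintegral_mul_lintegral_of_indepFun (hφ.comp hPim) (hψ.comp hX₀m)
      (hindep₁.comp hφ hψ)
  have e2 : ∫⁻ ω, f2 ω ∂P = P {ω | X₀ ω > u}
      * (∫⁻ ω, (if V ω > u / 2 then ENNReal.ofReal (V ω ^ ξ) else 0) ∂P) := by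
    have hχ : Measurable fun x : ℝ => if x > u then (1:ℝ≥0∞) else 0 :=
      Measurable.ite hsu measurable_const measurable_const
    have hψ : Measurable fun x : ℝ => if x > u / 2 then ENNReal.ofReal (x ^ ξ) else 0 :=
      Measurable.ite hsu2 (by fun_prop) measurable_const
    have h := lintegral_mul_eq_lintegral_mul_lintegral_of_indepFun (hχ.comp hX₀m) (hψ.comp hVm)
      ((hindep₂.symm).comp hχ hψ)
    have hind : ∫⁻ ω, (if X₀ ω > u then (1:ℝ≥0∞) else 0) ∂P = P {ω | X₀ ω > u} := by
      rw [show (fun ω => if X₀ ω > u then (1:ℝ≥0∞) else 0)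
          = {ω | X₀ ω > u}.indicator (fun _ => 1) from by
        funext ω; simp [Set.indicator_apply]]
      have hS0 : MeasurableSet {ω | X₀ ω > u} := hsu.preimage hX₀m
      rw [lintegral_indicator hS0]
      simp
    calc ∫⁻ ω, f2 ω ∂P
        = (∫⁻ ω, (if X₀ ω > u then (1:ℝ≥0∞) else 0) ∂P)
          * ∫⁻ ω, (if V ω > u / 2 then ENNReal.ofReal (V ω ^ ξ) else 0) ∂P := h
      _ = _ := by rw [hind]
  have e3 : ∫⁻ ω, f3 ω ∂P = ENNReal.ofReal ((u / 2) ^ ξ)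
      * P {ω | X₀ ω > u ∧ Pi ω * X₀ ω > u / 2} := by
    have hS : MeasurableSet {ω | X₀ ω > u ∧ Pi ω * X₀ ω > u / 2} :=
      (hsu.preimage hX₀m).inter (hsu2.preimage (hPim.mul hX₀m))
    rw [hf3, lintegral_const_mul _ (Measurable.ite hS measurable_const measurable_const)]
    congr 1
    rw [show (fun ω => if X₀ ω > u ∧ Pi ω * X₀ ω > u / 2 then (1:ℝ≥0∞) else 0)
        = {ω | X₀ ω > u ∧ Pi ω * X₀ ω > u / 2}.indicator (fun _ => 1) from by
      funext ω; simp [Set.indicator_apply]]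
    rw [lintegral_indicator hS]
    simp
  rw [e1, e2, e3]
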